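/- Let Σ be a constant symmetric complex n×n matrix with Σ² + p = 0 (p constant symmetric), and let S₀ be a symmetric complex matrix with S₀ − Σ invertible. Then S(u) = Σ + [exp(uΣ)·(S₀−Σ)⁻¹·exp(uΣ) + uE(2uΣ)]⁻¹ solves the Sachs equation S' + S² + p = 0 with S(0) = S₀, on a neighborhood of u = 0 where the bracketed matrix is invertible. Here E is the entire function with zE(z) = eᶻ − 1. -/

import Mathlib

open Matrix

attribute [local instance] Matrix.linftyOpNormedAddCommGroup Matrix.linftyOpNormedRing
  Matrix.linftyOpNormedAlgebra Matrix.linftyOpNormedSpace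

/-- The entire function `E` with `zE(z) = eᶻ - 1`, i.e. `E(z) = ∑ zᵏ/(k+1)!`,
applied to a matrix argument. -/
noncomputable def matE {n : ℕ} (M : Matrix (Fin n) (Fin n) ℂ) : Matrix (Fin n) (Fin n) ℂ :=
  ∑' k : ℕ, ((Nat.factorial (k + 1) : ℂ)⁻¹) • M ^ k

namespace SachsAux

abbrev MA (n : ℕ) := Matrix (Fin n) (Fin n) ℂ

variable {n : ℕ}

theorem entry_le {m k : Type*} [Fintype m] [Fintype k] {α : Type*} [NormedAddCommGroup α]
    (M : Matrix m k α) (i : m) (j : k) : ‖M i j‖ ≤ ‖M‖ := by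
  have h : ‖M i j‖₊ ≤ ‖M‖₊ := by
    rw [Matrix.linfty_opNNNorm_def]
    exact le_trans (Finset.single_le_sum (f := fun j => ‖M i j‖₊) (fun _ _ => zero_le)
      (Finset.mem_univ j))
      (Finset.le_sup (f := fun i => ∑ j, ‖M i j‖₊) (Finset.mem_univ i))
  exact h

/-- The `(i,j)` entry map as a continuous linear map. -/
noncomputable def entryCLM (i j : Fin 2) : Matrix (Fin 2) (Fin 2) (MA n) →L[ℝ] MA n :=
  LinearMap.mkContinuous
    { toFun := fun M => M i j
      map_add' := fun _ _ => rfl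
      map_smul' := fun _ _ => rfl } 1
    (fun M => by rw [one_mul]; exact entry_le M i j)

theorem matE_summable (M : MA n) :
    Summable fun k : ℕ => ((Nat.factorial (k + 1) : ℂ)⁻¹) • M ^ k := by
  apply Summable.of_norm_bounded (NormedSpace.norm_expSeries_summable' (𝕂 := ℂ) M)
  intro k
  rw [norm_smul, norm_smul]
  gcongr
  simp only [norm_inv, Complex.norm_natCast]
  have h1 : (0:ℝ) < k.factorial := by positivity
  have h2 : (k.factorial : ℝ) ≤ ((k+1).factorial : ℝ) := by
    exact_mod_cast Nat.factorial_le (Nat.le_succ k)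
  exact inv_anti₀ h1 h2

/-- The auxiliary nilpotent-augmented block matrix. -/
noncomputable def NN (Sg : MA n) : Matrix (Fin 2) (Fin 2) (MA n) := !![(2:ℂ) • Sg, 1; 0, 0]

theorem NN_pow (Sg : MA n) (k : ℕ) :
    (NN Sg) ^ (k+1) = !![((2:ℂ) • Sg) ^ (k+1), ((2:ℂ) • Sg) ^ k; 0, 0] := by
  induction k with
  | zero => simp [NN]
  | succ k ih =>
      rw [pow_succ, ih, NN, Matrix.mul_fin_two]
      simp [pow_succ]

theorem exp_NN_apply (Sg : MA n) (u : ℝ) (i j : Fin 2) :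
    NormedSpace.exp (u • NN Sg) i j
      = ∑' k : ℕ, (k.factorial : ℝ)⁻¹ • u ^ k • (((NN Sg) ^ k) i j) := by
  have hsum : Summable fun k : ℕ => ((k.factorial : ℝ)⁻¹) • (u • NN Sg) ^ k :=
    NormedSpace.expSeries_summable' (𝕂 := ℝ) _
  have : NormedSpace.exp (u • NN Sg) = ∑' k : ℕ, ((k.factorial : ℝ)⁻¹) • (u • NN Sg) ^ k := by
    rw [NormedSpace.exp_eq_tsum ℝ]
  rw [this]
  have hmap := (entryCLM (n := n) i j).map_tsum hsum
  simp only [entryCLM, LinearMap.mkContinuous_apply, LinearMap.coe_mk, AddHom.coe_mk] at hmap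
  refine hmap.trans ?_
  refine tsum_congr fun k => ?_
  rw [smul_pow]
  rfl

theorem exp_NN_one_one (Sg : MA n) (u : ℝ) : NormedSpace.exp (u • NN Sg) 1 1 = 1 := by
  rw [exp_NN_apply]
  rw [tsum_eq_single 0]
  · simp
  · intro k hk
    obtain ⟨k, rfl⟩ := Nat.exists_eq_succ_of_ne_zero hk
    rw [NN_pow]
    simp

theorem real_smul_eq (r : ℝ) (X : MA n) : r • X = (r : ℂ) • X := by
  rw [← algebraMap_smul ℂ r X]
  norm_num

theorem exp_NN_zero_one (Sg : MA n) (u : ℝ) :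
    NormedSpace.exp (u • NN Sg) 0 1 = u • matE ((2 * u) • Sg) := by
  rw [exp_NN_apply]
  have hsum : Summable (fun k : ℕ => (k.factorial : ℝ)⁻¹ • u ^ k • (((NN Sg) ^ k) 0 1)) := by
    have h0 : Summable fun k : ℕ => ((k.factorial : ℝ)⁻¹) • (u • NN Sg) ^ k :=
      NormedSpace.expSeries_summable' (𝕂 := ℝ) _
    have h1 := h0.map (entryCLM (n := n) 0 1) (entryCLM (n := n) 0 1).continuous
    refine h1.congr fun k => ?_
    simp only [Function.comp_apply]
    rw [smul_pow]
    rfl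
  rw [Summable.tsum_eq_zero_add hsum]
  have h00 : ((1 : Matrix (Fin 2) (Fin 2) (MA n)) 0 1) = 0 := by
    rw [Matrix.one_apply_ne (by decide)]
  simp only [pow_zero, Nat.factorial_zero, Nat.cast_one, inv_one, one_smul, h00, smul_zero,
    zero_add]
  rw [matE, ← Summable.tsum_const_smul u (matE_summable _)]
  refine tsum_congr fun k => ?_
  rw [NN_pow]
  show ((k+1).factorial : ℝ)⁻¹ • u ^ (k+1) • ((2:ℂ) • Sg) ^ k
      = u • (((k+1).factorial : ℂ)⁻¹ • ((2*u) • Sg) ^ k)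
  rw [smul_pow, smul_pow]
  simp only [real_smul_eq, smul_smul]
  congr 1
  push_cast
  ring

theorem hasDerivAt_g (Sg : MA n) (u : ℝ) :
    HasDerivAt (fun v : ℝ => v • matE ((2 * v) • Sg))
      ((2:ℂ) • Sg * (u • matE ((2 * u) • Sg)) + 1) u := by
  have hd := hasDerivAt_exp_smul_const' (𝕂 := ℝ) (NN Sg) u
  have h := (entryCLM (n := n) 0 1).hasFDerivAt.comp_hasDerivAt u hd
  have hfun : (fun v : ℝ => entryCLM (n := n) 0 1 (NormedSpace.exp (v • NN Sg)))
      = fun v : ℝ => v • matE ((2 * v) • Sg) := funext fun v => exp_NN_zero_one Sg v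
  rw [Function.comp_def] at h
  have hval : entryCLM (n := n) 0 1 (NN Sg * NormedSpace.exp (u • NN Sg))
      = (2:ℂ) • Sg * (u • matE ((2 * u) • Sg)) + 1 := by
    show (NN Sg * NormedSpace.exp (u • NN Sg)) 0 1 = _
    rw [Matrix.mul_apply, Fin.sum_univ_two, exp_NN_zero_one, exp_NN_one_one]
    have h0 : NN Sg 0 0 = (2:ℂ) • Sg := rfl
    have h1 : NN Sg 0 1 = 1 := rfl
    rw [h0, h1, one_mul]
  exact (h.congr_deriv hval).congr_of_eventuallyEq
    (Filter.Eventually.of_forall fun v => (congrFun hfun v).symm)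

theorem matE_comm (Sg : MA n) (u : ℝ) :
    Sg * matE ((2 * u) • Sg) = matE ((2 * u) • Sg) * Sg := by
  rw [matE]
  have hl := (ContinuousLinearMap.mul ℂ (MA n) Sg).map_tsum (matE_summable ((2 * u) • Sg))
  have hr := ((ContinuousLinearMap.mul ℂ (MA n)).flip Sg).map_tsum (matE_summable ((2 * u) • Sg))
  simp only [ContinuousLinearMap.mul_apply'] at hl
  simp only [ContinuousLinearMap.flip_apply, ContinuousLinearMap.mul_apply'] at hr
  refine hl.trans (Eq.trans ?_ hr.symm)
  refine tsum_congr fun k => ?_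
  show Sg * (_ • ((2 * u) • Sg) ^ k) = (_ • ((2 * u) • Sg) ^ k) * Sg
  rw [mul_smul_comm, smul_mul_assoc]
  congr 1
  exact (((Commute.refl Sg).smul_left ((2:ℝ) * u)).pow_left k).eq.symm

theorem hasDerivAt_K (Sg A₀ : MA n) (u : ℝ) :
    HasDerivAt (fun v : ℝ =>
        NormedSpace.exp (v • Sg) * A₀ * NormedSpace.exp (v • Sg) + v • matE ((2 * v) • Sg))
      (Sg * (NormedSpace.exp (u • Sg) * A₀ * NormedSpace.exp (u • Sg)
          + u • matE ((2 * u) • Sg))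
        + (NormedSpace.exp (u • Sg) * A₀ * NormedSpace.exp (u • Sg)
          + u • matE ((2 * u) • Sg)) * Sg + 1) u := by
  have h1 : HasDerivAt (fun v : ℝ => NormedSpace.exp (v • Sg))
      (Sg * NormedSpace.exp (u • Sg)) u := hasDerivAt_exp_smul_const' Sg u
  have h2 : HasDerivAt (fun v : ℝ => NormedSpace.exp (v • Sg))
      (NormedSpace.exp (u • Sg) * Sg) u := hasDerivAt_exp_smul_const Sg u
  have h3 := ((h1.mul_const A₀).mul h2).add (hasDerivAt_g Sg u)
  refine h3.congr_deriv ?_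
  symm
  set E := NormedSpace.exp (u • Sg)
  set g := u • matE ((2 * u) • Sg) with hgdef
  have hg : g * Sg = Sg * g := by
    rw [hgdef, smul_mul_assoc, mul_smul_comm, matE_comm]
  have h2s : ((2:ℂ) • Sg) * g = Sg * g + Sg * g := by
    rw [two_smul, add_mul]
  simp only [mul_add, add_mul, hg, h2s, mul_assoc]
  abel

end SachsAux

open SachsAux in
/-- Let `Sigma` be a constant symmetric complex solution of `Sigma² + p = 0` and `S₀`
symmetric with `S₀ - Sigma` invertible.  Then
`S(u) = Sigma + [exp(u Sigma) (S₀ - Sigma)⁻¹ exp(u Sigma) + u E(2u Sigma)]⁻¹`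
solves the Sachs equation `S' + S² + p = 0` with `S(0) = S₀`, on a neighborhood of `0`
where the bracketed matrix is invertible. -/
theorem stmt9 {n : ℕ} (p Sg S₀ : Matrix (Fin n) (Fin n) ℂ)
    (hpsym : pᵀ = p) (hSgsym : Sgᵀ = Sg) (hS₀sym : S₀ᵀ = S₀)
    (hSg : Sg ^ 2 + p = 0) (hunit : IsUnit (S₀ - Sg))
    (K : ℝ → Matrix (Fin n) (Fin n) ℂ)
    (hK : ∀ u : ℝ, K u =
      NormedSpace.exp (u • Sg) * (S₀ - Sg)⁻¹ * NormedSpace.exp (u • Sg)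
        + u • matE ((2 * u) • Sg))
    (S : ℝ → Matrix (Fin n) (Fin n) ℂ)
    (hS : ∀ u : ℝ, S u = Sg + (K u)⁻¹)
    (V : Set ℝ) (hV : V ∈ nhds (0 : ℝ)) (hVopen : IsOpen V)
    (hinv : ∀ u ∈ V, IsUnit (K u)) :
    S 0 = S₀ ∧ ∀ u ∈ V, HasDerivAt S (-(S u ^ 2) - p) u := by
  have hexpRC : (NormedSpace.exp : MA n → MA n) = NormedSpace.exp :=
    rfl
  have hKfun : K = fun v : ℝ =>
      NormedSpace.exp (v • Sg) * (S₀ - Sg)⁻¹ * NormedSpace.exp (v • Sg)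
        + v • matE ((2 * v) • Sg) := funext fun v => by rw [hK v, hexpRC]
  constructor
  · -- S 0 = S₀
    have hK0 : K 0 = (S₀ - Sg)⁻¹ := by
      rw [hKfun]
      simp [NormedSpace.exp_zero]
    rw [hS 0, hK0,
      Matrix.nonsing_inv_nonsing_inv _ ((Matrix.isUnit_iff_isUnit_det _).mp hunit),
      add_sub_cancel]
  · intro u hu
    have hu' : IsUnit (K u) := hinv u hu
    have hKu : K u = NormedSpace.exp (u • Sg) * (S₀ - Sg)⁻¹ * NormedSpace.exp (u • Sg)
        + u • matE ((2 * u) • Sg) := by rw [hK u, hexpRC]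
    -- derivative of K
    have hKd : HasDerivAt K (Sg * K u + K u * Sg + 1) u := by
      have h := hasDerivAt_K Sg (S₀ - Sg)⁻¹ u
      rw [← hKu] at h
      rw [show (fun v : ℝ =>
          NormedSpace.exp (v • Sg) * (S₀ - Sg)⁻¹ * NormedSpace.exp (v • Sg)
            + v • matE ((2 * v) • Sg)) = K from hKfun.symm] at h
      exact h
    -- derivative of the inverse
    have hinvF : HasFDerivAt Ring.inverse
        (-(ContinuousLinearMap.mulLeftRight ℝ (MA n) ((hu'.unit⁻¹ : (MA n)ˣ) : MA n)
          ((hu'.unit⁻¹ : (MA n)ˣ) : MA n))) (K u) := by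
      have := hasFDerivAt_ringInverse (𝕜 := ℝ) hu'.unit
      rwa [hu'.unit_spec] at this
    have hinvd := hinvF.comp_hasDerivAt u hKd
    have hinvd' : HasDerivAt (fun v : ℝ => Ring.inverse (K v))
        ((-(ContinuousLinearMap.mulLeftRight ℝ (MA n) ((hu'.unit⁻¹ : (MA n)ˣ) : MA n)
          ((hu'.unit⁻¹ : (MA n)ˣ) : MA n))) (Sg * K u + K u * Sg + 1)) u := hinvd
    have hcoe : ((hu'.unit⁻¹ : (MA n)ˣ) : MA n) = (K u)⁻¹ := by
      rw [← Ring.inverse_unit hu'.unit, hu'.unit_spec, Matrix.nonsing_inv_eq_ringInverse]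
    have hSfun : S = fun v : ℝ => Sg + Ring.inverse (K v) :=
      funext fun v => by rw [hS v, Matrix.nonsing_inv_eq_ringInverse]
    rw [hSfun]
    have hfinal := (hasDerivAt_const u Sg).add hinvd'
    refine hfinal.congr_deriv ?_
    symm
    -- value computation
    simp only [ContinuousLinearMap.neg_apply,
      ContinuousLinearMap.mulLeftRight_apply, hcoe, zero_add]
    have hdet := (Matrix.isUnit_iff_isUnit_det _).mp hu'
    have e1 : K u * (K u)⁻¹ = 1 := Matrix.mul_nonsing_inv _ hdet
    have e2 : (K u)⁻¹ * K u = 1 := Matrix.nonsing_inv_mul _ hdet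
    set x := (K u)⁻¹ with hx
    have expand : x * (Sg * K u + K u * Sg + 1) * x = x * Sg + Sg * x + x * x := by
      rw [mul_add, mul_add, add_mul, add_mul, mul_one]
      have a1 : x * (Sg * K u) * x = (x * Sg) * (K u * x) := by noncomm_ring
      have a2 : x * (K u * Sg) * x = (x * K u) * (Sg * x) := by noncomm_ring
      rw [a1, a2, e1, e2, mul_one, one_mul]
    have hSg2 : Sg ^ 2 = -p := eq_neg_of_add_eq_zero_left hSg
    have hri : Ring.inverse (K u) = x := (Matrix.nonsing_inv_eq_ringInverse _).symm
    have hsq : (Sg + x) ^ 2 = Sg ^ 2 + Sg * x + x * Sg + x * x := by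
      rw [pow_two, mul_add, add_mul, add_mul, ← pow_two]
      abel
    rw [hri, expand, hsq, hSg2]
    abel
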